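/- arXiv:2412.00212 — 3 statements merged into one kernel-verified Lean document; each statement's English description precedes it below -/
import Mathlib

section
/- The maximum construction cost of the symmetric double star D_n is ν*(D_n) = 10n² + 10n + 3 for all n ≥ 1. -/
namespace ConsCost

variable {V : Type*} [Fintype V]

/-- The number of elements (vertices plus edges) of a graph. -/
noncomputable def numElts (G : SimpleGraph V) : ℕ :=
  Fintype.card V + Nat.card G.edgeSet

/-- `x` is a construction sequence for `G`: a bijective listing of the vertices and
edges of `G` in which every edge appears after both of its endpoints. -/
def IsCSeq (G : SimpleGraph V) (x : Fin (numElts G) ≃ V ⊕ G.edgeSet) : Prop :=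
  ∀ (e : G.edgeSet), ∀ v ∈ (e : Sym2 V), x.symm (Sum.inl v) < x.symm (Sum.inr e)

/-- The cost `ν(e,x) = (x⁻¹e − x⁻¹u) + (x⁻¹e − x⁻¹w)` of an edge `e = uw`
in the construction sequence `x`. -/
noncomputable def edgeCost (G : SimpleGraph V) (x : Fin (numElts G) ≃ V ⊕ G.edgeSet)
    (e : G.edgeSet) : ℕ :=
  2 * (x.symm (Sum.inr e) : ℕ) -
    Sym2.lift ⟨fun u w => ((x.symm (Sum.inl u) : ℕ) + (x.symm (Sum.inl w) : ℕ)),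
      fun u w => by dsimp only; omega⟩ (e : Sym2 V)

/-- The cost `ν(x)` of a construction sequence: the sum of the costs of all edges. -/
noncomputable def cost (G : SimpleGraph V) (x : Fin (numElts G) ≃ V ⊕ G.edgeSet) : ℕ :=
  ∑ᶠ e : G.edgeSet, edgeCost G x e

/-- The maximum construction cost `ν*(G)`. -/
noncomputable def maxCost (G : SimpleGraph V) : ℕ :=
  sSup {c | ∃ x, IsCSeq G x ∧ cost G x = c}

/-- The minimum construction cost `ν_*(G)`. -/
noncomputable def minCost (G : SimpleGraph V) : ℕ :=
  sInf {c | ∃ x, IsCSeq G x ∧ cost G x = c}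
/-- The symmetric double star `D_n`: two disjoint copies of the star `K_{1,n}`
(each copy indexed by an element of `Fin 2`, with hub `(i, 0)` and leaves `(i, k)`,
`k ≠ 0`) together with an edge joining the two hubs. -/
def doubleStar (n : ℕ) : SimpleGraph (Fin 2 × Fin (n + 1)) :=
  SimpleGraph.fromRel (fun a b => a.2 = 0 ∧ (b.2 = 0 ∨ a.1 = b.1))

/-! ### Auxiliary material for the double star computation -/

section Aux

lemma sum_range_card_le (s : Finset ℕ) : ∑ i ∈ Finset.range s.card, i ≤ ∑ x ∈ s, x := by
  generalize hm : s.card = m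
  induction m generalizing s with
  | zero => simp
  | succ m ih =>
    have hne : s.Nonempty := by rw [← Finset.card_pos, hm]; omega
    set M := s.max' hne with hM
    have hmem : M ∈ s := s.max'_mem hne
    have hsub : s ⊆ Finset.range (M+1) := by
      intro x hx
      simp only [Finset.mem_range]
      exact Nat.lt_succ_of_le (s.le_max' x hx)
    have hcard : m ≤ M := by
      have := Finset.card_le_card hsub
      simp [Finset.card_range, hm] at this
      omega
    have herase : (s.erase M).card = m := by
      rw [Finset.card_erase_of_mem hmem, hm]
      omega
    have := ih (s.erase M) herase
    have hsum : ∑ x ∈ s, x = M + ∑ x ∈ s.erase M, x := (Finset.add_sum_erase s id hmem).symm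
    rw [Finset.sum_range_succ, hsum]
    omega

lemma card_mul_le_two_sum {α : Type*} [Fintype α] (f : α → ℕ) (hf : Function.Injective f) :
    Fintype.card α * (Fintype.card α - 1) ≤ 2 * ∑ a, f a := by
  have himg : ∑ a, f a = ∑ x ∈ Finset.univ.image f, x := by
    rw [Finset.sum_image (fun a _ b _ h => hf h)]
  have hc : (Finset.univ.image f).card = Fintype.card α := by
    rw [Finset.card_image_of_injective _ hf, Finset.card_univ]
  have h1 := sum_range_card_le (Finset.univ.image f)
  have h2 := Finset.sum_range_id_mul_two (Finset.univ.image f).card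
  rw [hc] at h1 h2
  rw [himg]
  omega

lemma zero_ne_succ' {m : ℕ} (k : Fin m) : (0 : Fin (m+1)) ≠ k.succ :=
  (Fin.succ_ne_zero k).symm

variable (n : ℕ)

lemma spoke_adj (i : Fin 2) (k : Fin n) : s((i,0),(i, k.succ)) ∈ (doubleStar n).edgeSet := by
  simp [doubleStar, SimpleGraph.fromRel_adj, Prod.ext_iff, (Fin.succ_ne_zero k).symm,
    Fin.succ_ne_zero k]

lemma mid_adj : s(((0 : Fin 2),(0 : Fin (n+1))),((1 : Fin 2),(0 : Fin (n+1)))) ∈ (doubleStar n).edgeSet := by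
  simp [doubleStar, SimpleGraph.fromRel_adj, Prod.ext_iff]

lemma edge_class (e : Sym2 (Fin 2 × Fin (n+1))) (he : e ∈ (doubleStar n).edgeSet) :
    e = s((0,0),(1,0)) ∨ ∃ i : Fin 2, ∃ k : Fin n, e = s((i,0),(i,k.succ)) := by
  induction e using Sym2.ind with
  | _ a b =>
    rw [SimpleGraph.mem_edgeSet, doubleStar, SimpleGraph.fromRel_adj] at he
    obtain ⟨hne, h⟩ := he
    obtain ⟨a1, a2⟩ := a
    obtain ⟨b1, b2⟩ := b
    by_cases ha : a2 = 0 <;> by_cases hb : b2 = 0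
    · subst ha; subst hb
      left
      have h1 : a1 ≠ b1 := fun h' => hne (by simp [h'])
      fin_cases a1 <;> fin_cases b1 <;> simp_all [Sym2.eq_swap]
    · subst ha
      obtain ⟨k, rfl⟩ := Fin.exists_succ_eq_of_ne_zero hb
      right; exact ⟨a1, k, by
        have : a1 = b1 := by
          rcases h with ⟨_, h|h⟩ | ⟨h, _⟩
          · exact absurd h (Fin.succ_ne_zero k)
          · exact h
          · exact absurd h (Fin.succ_ne_zero k)
        subst this; rfl⟩
    · subst hb
      obtain ⟨k, rfl⟩ := Fin.exists_succ_eq_of_ne_zero ha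
      right; exact ⟨b1, k, by
        have : b1 = a1 := by
          rcases h with ⟨h, _⟩ | ⟨_, h|h⟩
          · exact absurd h (Fin.succ_ne_zero k)
          · exact absurd h (Fin.succ_ne_zero k)
          · exact h
        subst this; exact Sym2.eq_swap⟩
    · rcases h with ⟨h, _⟩ | ⟨h, _⟩
      · exact absurd h ha
      · exact absurd h hb

def spokeE (i : Fin 2) (k : Fin n) : (doubleStar n).edgeSet :=
  ⟨s((i,0),(i,k.succ)), spoke_adj n i k⟩

def midE : (doubleStar n).edgeSet := ⟨s((0,0),(1,0)), mid_adj n⟩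

def edF (z : (Fin 2 × Fin n) ⊕ Unit) : (doubleStar n).edgeSet :=
  match z with
  | .inl (i,k) => spokeE n i k
  | .inr _ => midE n

lemma edF_bij : Function.Bijective (edF n) := by
  constructor
  · rintro (⟨i,k⟩|⟨⟩) (⟨i',k'⟩|⟨⟩) h
    · simp only [edF, spokeE, Subtype.mk.injEq, Sym2.eq_iff, Prod.ext_iff] at h
      rcases h with ⟨⟨hi, _⟩, ⟨_, hk⟩⟩ | ⟨⟨_, h0⟩, _⟩
      · rw [Fin.succ_inj] at hk; simp [hi, hk]
      · exact absurd h0.symm (Fin.succ_ne_zero k')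
    · simp [edF, spokeE, midE, Sym2.eq_iff, Prod.ext_iff, Fin.succ_ne_zero,
        zero_ne_succ'] at h
    · simp [edF, spokeE, midE, Sym2.eq_iff, Prod.ext_iff, Fin.succ_ne_zero,
        zero_ne_succ'] at h
    · rfl
  · rintro ⟨e, he⟩
    rcases edge_class n e he with h | ⟨i, k, h⟩
    · exact ⟨Sum.inr (), by simp [edF, midE, h]⟩
    · exact ⟨Sum.inl (i,k), by simp [edF, spokeE, h]⟩

/-- The equivalence indexing the edges of the double star. -/
noncomputable def edE : (Fin 2 × Fin n) ⊕ Unit ≃ (doubleStar n).edgeSet :=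
  Equiv.ofBijective _ (edF_bij n)

lemma card_edgeSet : Nat.card (doubleStar n).edgeSet = 2*n+1 := by
  rw [← Nat.card_congr (edE n)]
  simp [Nat.card_eq_fintype_card]

lemma numElts_eq : numElts (doubleStar n) = 4*n+3 := by
  rw [numElts, card_edgeSet]
  simp [Fintype.card_prod]
  omega

/-! ### The optimal construction sequence -/

def FF : Fin 2 × Fin (n+1) → Fin 2 × Fin (n+1) → ℕ := fun a b =>
  if a.2 = 0 ∧ b.2 = 0 then 4*n+2
  else if a.2 = 0 then 2*n+1 + (b.1 : ℕ)*n + (b.2 : ℕ)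
  else if b.2 = 0 then 2*n+1 + (a.1 : ℕ)*n + (a.2 : ℕ)
  else 0

lemma FF_symm : ∀ a b, FF n a b = FF n b a := by
  intro a b
  rcases em (a.2 = 0) with h1 | h1 <;> rcases em (b.2 = 0) with h2 | h2 <;>
    simp [FF, h1, h2]

def gN : (Fin 2 × Fin (n+1)) ⊕ (doubleStar n).edgeSet → ℕ := fun z =>
  match z with
  | .inl (i,k) => if k = 0 then (i:ℕ) else 1 + (i:ℕ)*n + (k:ℕ)
  | .inr e => Sym2.lift ⟨FF n, FF_symm n⟩ (e : Sym2 _)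

lemma gN_hub (i : Fin 2) : gN n (.inl (i,0)) = (i:ℕ) := by simp [gN]

lemma gN_leaf (i : Fin 2) (k : Fin n) :
    gN n (.inl (i,k.succ)) = 1 + (i:ℕ)*n + ((k:ℕ)+1) := by
  simp [gN, Fin.succ_ne_zero, Fin.val_succ]

lemma gN_spoke (i : Fin 2) (k : Fin n) :
    gN n (.inr (spokeE n i k)) = 2*n+1 + (i:ℕ)*n + ((k:ℕ)+1) := by
  simp [gN, spokeE, FF, Fin.succ_ne_zero, Fin.val_succ]

lemma gN_mid : gN n (.inr (midE n)) = 4*n+2 := by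
  simp [gN, midE, FF]

lemma gN_vert_le (v : Fin 2 × Fin (n+1)) : gN n (.inl v) ≤ 2*n+1 := by
  obtain ⟨i, k⟩ := v
  have hi : (i:ℕ) ≤ 1 := by omega
  have hk : (k:ℕ) ≤ n := by omega
  have him : (i:ℕ)*n ≤ 1*n := Nat.mul_le_mul_right n hi
  by_cases h : k = 0 <;> simp [gN, h] <;> omega

lemma gN_edge_ge (e : (doubleStar n).edgeSet) : 2*n+2 ≤ gN n (.inr e) := by
  rcases edge_class n e.1 e.2 with h | ⟨i, k, h⟩
  · have : e = midE n := Subtype.ext h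
    rw [this, gN_mid]; omega
  · have : e = spokeE n i k := Subtype.ext h
    rw [this, gN_spoke]; omega

lemma gN_edge_le (e : (doubleStar n).edgeSet) : gN n (.inr e) ≤ 4*n+2 := by
  rcases edge_class n e.1 e.2 with h | ⟨i, k, h⟩
  · have : e = midE n := Subtype.ext h
    rw [this, gN_mid]
  · have : e = spokeE n i k := Subtype.ext h
    rw [this, gN_spoke]
    have hi : (i:ℕ)*n ≤ 1*n := Nat.mul_le_mul_right n (by omega)
    have hk : (k:ℕ)+1 ≤ n := by omega
    omega

lemma gN_lt (z : (Fin 2 × Fin (n+1)) ⊕ (doubleStar n).edgeSet) : gN n z < 4*n+3 := by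
  rcases z with v | e
  · have := gN_vert_le n v; omega
  · have := gN_edge_le n e; omega

lemma gN_inj : Function.Injective (gN n) := by
  rintro (⟨i,k⟩ | e) (⟨i',k'⟩ | e') h
  · by_cases h0 : k = 0 <;> by_cases h0' : k' = 0
    · subst h0; subst h0'
      rw [gN_hub, gN_hub] at h
      simp [Fin.ext_iff, Prod.ext_iff, h]
    · obtain ⟨c, rfl⟩ := Fin.exists_succ_eq_of_ne_zero h0'
      rw [h0, gN_hub, gN_leaf] at h
      have : (i:ℕ) ≤ 1 := by omega
      omega
    · obtain ⟨c, rfl⟩ := Fin.exists_succ_eq_of_ne_zero h0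
      rw [h0', gN_leaf, gN_hub] at h
      have : (i':ℕ) ≤ 1 := by omega
      omega
    · obtain ⟨c, rfl⟩ := Fin.exists_succ_eq_of_ne_zero h0
      obtain ⟨c', rfl⟩ := Fin.exists_succ_eq_of_ne_zero h0'
      rw [gN_leaf, gN_leaf] at h
      have hc : (c:ℕ) < n := c.isLt
      have hc' : (c':ℕ) < n := c'.isLt
      fin_cases i <;> fin_cases i' <;>
        simp_all [Prod.ext_iff, Fin.ext_iff, Fin.val_succ] <;> omega
  · have h1 := gN_vert_le n (i,k)
    have h2 := gN_edge_ge n e'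
    omega
  · have h1 := gN_vert_le n (i',k')
    have h2 := gN_edge_ge n e
    omega
  · rcases edge_class n e.1 e.2 with he | ⟨i, k, he⟩ <;>
      rcases edge_class n e'.1 e'.2 with he' | ⟨i', k', he'⟩
    · have he2 : e = midE n := Subtype.ext he
      have he2' : e' = midE n := Subtype.ext he'
      rw [he2, he2']
    · have he2 : e = midE n := Subtype.ext he
      have he2' : e' = spokeE n i' k' := Subtype.ext he'
      rw [he2, he2', gN_mid, gN_spoke] at h
      have hi : (i':ℕ)*n ≤ 1*n := Nat.mul_le_mul_right n (by omega)
      have hk : (k':ℕ)+1 ≤ n := by omega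
      omega
    · have he2 : e = spokeE n i k := Subtype.ext he
      have he2' : e' = midE n := Subtype.ext he'
      rw [he2, he2', gN_spoke, gN_mid] at h
      have hi : (i:ℕ)*n ≤ 1*n := Nat.mul_le_mul_right n (by omega)
      have hk : (k:ℕ)+1 ≤ n := by omega
      omega
    · have he2 : e = spokeE n i k := Subtype.ext he
      have he2' : e' = spokeE n i' k' := Subtype.ext he'
      rw [he2, he2'] at h ⊢
      rw [gN_spoke, gN_spoke] at h
      have hk : (k:ℕ) < n := k.isLt
      have hk' : (k':ℕ) < n := k'.isLt
      have : i = i' ∧ (k:ℕ) = (k':ℕ) := by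
        fin_cases i <;> fin_cases i' <;> simp_all <;> omega
      obtain ⟨rfl, hkk⟩ := this
      have : k = k' := Fin.ext hkk
      rw [this]

lemma g_bij : Function.Bijective (fun z => (⟨gN n z, gN_lt n z⟩ : Fin (4*n+3))) := by
  rw [Nat.bijective_iff_injective_and_card]
  constructor
  · intro a b h
    exact gN_inj n (by simpa [Fin.ext_iff] using h)
  · simp [Nat.card_sum, card_edgeSet, Nat.card_eq_fintype_card, Fintype.card_prod, -Nat.card_coe_set_eq]
    omega

/-- The optimal construction sequence. -/
noncomputable def x0 : Fin (numElts (doubleStar n)) ≃ (Fin 2 × Fin (n+1)) ⊕ (doubleStar n).edgeSet :=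
  (finCongr (numElts_eq n)).trans (Equiv.ofBijective _ (g_bij n)).symm

lemma x0_symm_val (z) : (((x0 n).symm z : Fin (numElts (doubleStar n))) : ℕ) = gN n z := rfl

lemma isCSeq_x0 : IsCSeq (doubleStar n) (x0 n) := by
  intro e v _
  rw [Fin.lt_def, x0_symm_val, x0_symm_val]
  have h1 := gN_vert_le n v
  have h2 := gN_edge_ge n e
  omega

/-! ### Computing costs -/

lemma cost_eq (x : Fin (numElts (doubleStar n)) ≃ (Fin 2 × Fin (n+1)) ⊕ (doubleStar n).edgeSet) :
    cost (doubleStar n) x =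
      (∑ p : Fin 2 × Fin n, edgeCost (doubleStar n) x (spokeE n p.1 p.2)) +
        edgeCost (doubleStar n) x (midE n) := by
  rw [cost, ← finsum_comp_equiv (edE n), finsum_eq_sum_of_fintype, Fintype.sum_sum_type]
  simp [edE, edF]

lemma edgeCost_mk (x : Fin (numElts (doubleStar n)) ≃ (Fin 2 × Fin (n+1)) ⊕ (doubleStar n).edgeSet)
    (u w : Fin 2 × Fin (n+1)) (h : s(u,w) ∈ (doubleStar n).edgeSet) :
    edgeCost (doubleStar n) x ⟨s(u,w), h⟩ =
      2 * ((x.symm (Sum.inr ⟨s(u,w), h⟩) : Fin (numElts (doubleStar n))) : ℕ) -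
        (((x.symm (Sum.inl u) : Fin (numElts (doubleStar n))) : ℕ) +
          ((x.symm (Sum.inl w) : Fin (numElts (doubleStar n))) : ℕ)) := by
  rfl

lemma cost_x0 (hn : 1 ≤ n) : cost (doubleStar n) (x0 n) = 10*n^2 + 10*n + 3 := by
  obtain ⟨m, rfl⟩ : ∃ m, n = m + 1 := ⟨n - 1, by omega⟩
  set n := m + 1 with hn_def
  rw [cost_eq]
  have hmid : edgeCost (doubleStar n) (x0 n) (midE n) = 8*n+3 := by
    rw [show midE n = ⟨s(((0 : Fin 2),(0 : Fin (n+1))),((1 : Fin 2),(0 : Fin (n+1)))), mid_adj n⟩ from rfl,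
      edgeCost_mk]
    have h1 : ((x0 n).symm (Sum.inr ⟨s(((0 : Fin 2),(0 : Fin (n+1))),((1 : Fin 2),(0 : Fin (n+1)))), mid_adj n⟩) : ℕ) = 4*n+2 := by
      rw [x0_symm_val]; exact gN_mid n
    have h2 : (((x0 n).symm (Sum.inl ((0 : Fin 2),(0 : Fin (n+1))))) : ℕ) = 0 := by
      rw [x0_symm_val]; exact gN_hub n 0
    have h3 : (((x0 n).symm (Sum.inl ((1 : Fin 2),(0 : Fin (n+1))))) : ℕ) = 1 := by
      rw [x0_symm_val]; exact gN_hub n 1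
    rw [h1, h2, h3]
    omega
  have hsp : ∀ (i : Fin 2) (k : Fin n), edgeCost (doubleStar n) (x0 n) (spokeE n i k) =
      4*n+2 + (i:ℕ)*n + (k:ℕ) - (i:ℕ) := by
    intro i k
    rw [show spokeE n i k = ⟨s((i,(0 : Fin (n+1))),(i,k.succ)), spoke_adj n i k⟩ from rfl,
      edgeCost_mk]
    have h1 : ((x0 n).symm (Sum.inr ⟨s((i,(0 : Fin (n+1))),(i,k.succ)), spoke_adj n i k⟩) : ℕ) =
        2*n+1 + (i:ℕ)*n + ((k:ℕ)+1) := by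
      rw [x0_symm_val]; exact gN_spoke n i k
    have h2 : (((x0 n).symm (Sum.inl (i,(0 : Fin (n+1))))) : ℕ) = (i:ℕ) := by
      rw [x0_symm_val]; exact gN_hub n i
    have h3 : (((x0 n).symm (Sum.inl (i,k.succ))) : ℕ) = 1 + (i:ℕ)*n + ((k:ℕ)+1) := by
      rw [x0_symm_val]; exact gN_leaf n i k
    rw [h1, h2, h3]
    have : (i:ℕ) ≤ 1 := by omega
    omega
  rw [hmid]
  rw [Fintype.sum_prod_type, Fin.sum_univ_two]
  have e0 : ∀ k : Fin n, edgeCost (doubleStar n) (x0 n) (spokeE n 0 k) = 4*n+2 + (k:ℕ) := by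
    intro k; rw [hsp 0 k]; simp
  have e1 : ∀ k : Fin n, edgeCost (doubleStar n) (x0 n) (spokeE n 1 k) = 5*n+1 + (k:ℕ) := by
    intro k; rw [hsp 1 k]; simp; omega
  rw [Finset.sum_congr rfl (fun k _ => e0 k), Finset.sum_congr rfl (fun k _ => e1 k)]
  set S := ∑ k : Fin n, (k:ℕ) with hS
  have hgauss : S * 2 = n * (n-1) := by
    rw [hS, Fin.sum_univ_eq_sum_range (fun i => i) n]
    exact Finset.sum_range_id_mul_two n
  have s0 : ∑ k : Fin n, (4*n+2 + (k:ℕ)) = n*(4*n+2) + S := by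
    rw [Finset.sum_add_distrib, Finset.sum_const, Finset.card_univ, Fintype.card_fin,
      smul_eq_mul, hS]
  have s1 : ∑ k : Fin n, (5*n+1 + (k:ℕ)) = n*(5*n+1) + S := by
    rw [Finset.sum_add_distrib, Finset.sum_const, Finset.card_univ, Fintype.card_fin,
      smul_eq_mul, hS]
  rw [s0, s1]
  have hg2 : S * 2 = (m+1) * m := by rw [hgauss, hn_def]; simp
  zify at hg2 ⊢
  linear_combination hg2 - ((n:ℤ) + m) * (by exact_mod_cast hn_def : (n:ℤ) = m + 1)

/-! ### The upper bound -/

lemma cost_le (hn : 1 ≤ n)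
    (x : Fin (numElts (doubleStar n)) ≃ (Fin 2 × Fin (n+1)) ⊕ (doubleStar n).edgeSet)
    (hx : IsCSeq (doubleStar n) x) :
    cost (doubleStar n) x ≤ 10*n^2 + 10*n + 3 := by
  letI : Fintype (doubleStar n).edgeSet := Fintype.ofFinite _
  set P : (Fin 2 × Fin (n+1)) ⊕ (doubleStar n).edgeSet → ℕ :=
    fun z => ((x.symm z : Fin (numElts (doubleStar n))) : ℕ) with hPdef
  -- per-edge exact cost
  have key : ∀ (i : Fin 2) (k : Fin n),
      (edgeCost (doubleStar n) x (spokeE n i k) : ℤ) =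
        2 * (P (Sum.inr (spokeE n i k)) : ℤ) - (P (Sum.inl (i, (0 : Fin (n+1)))) : ℤ)
          - (P (Sum.inl (i, k.succ)) : ℤ) := by
    intro i k
    have h1 := hx (spokeE n i k) (i, (0 : Fin (n+1))) (by simp [spokeE])
    have h2 := hx (spokeE n i k) (i, k.succ) (by simp [spokeE])
    rw [Fin.lt_def] at h1 h2
    rw [show spokeE n i k = ⟨s((i,(0 : Fin (n+1))),(i,k.succ)), spoke_adj n i k⟩ from rfl,
      edgeCost_mk]
    simp only [hPdef, spokeE] at h1 h2 ⊢
    omega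
  have keym : (edgeCost (doubleStar n) x (midE n) : ℤ) =
      2 * (P (Sum.inr (midE n)) : ℤ) - (P (Sum.inl ((0 : Fin 2), (0 : Fin (n+1)))) : ℤ)
        - (P (Sum.inl ((1 : Fin 2), (0 : Fin (n+1)))) : ℤ) := by
    have h1 := hx (midE n) ((0 : Fin 2), (0 : Fin (n+1))) (by simp [midE])
    have h2 := hx (midE n) ((1 : Fin 2), (0 : Fin (n+1))) (by simp [midE])
    rw [Fin.lt_def] at h1 h2
    rw [show midE n = ⟨s((((0 : Fin 2),(0 : Fin (n+1)))),(((1 : Fin 2),(0 : Fin (n+1))))), mid_adj n⟩ from rfl,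
      edgeCost_mk]
    simp only [hPdef, midE] at h1 h2 ⊢
    omega
  -- the cost in terms of the position sums
  have hcost : (cost (doubleStar n) x : ℤ) =
      2 * (∑ k : Fin n, (P (Sum.inr (spokeE n 0 k)) : ℤ))
        + 2 * (∑ k : Fin n, (P (Sum.inr (spokeE n 1 k)) : ℤ))
        + 2 * (P (Sum.inr (midE n)) : ℤ)
        - n * (P (Sum.inl ((0 : Fin 2), (0 : Fin (n+1)))) : ℤ)
        - n * (P (Sum.inl ((1 : Fin 2), (0 : Fin (n+1)))) : ℤ)
        - (∑ k : Fin n, (P (Sum.inl ((0 : Fin 2), k.succ)) : ℤ))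
        - (∑ k : Fin n, (P (Sum.inl ((1 : Fin 2), k.succ)) : ℤ))
        - (P (Sum.inl ((0 : Fin 2), (0 : Fin (n+1)))) : ℤ)
        - (P (Sum.inl ((1 : Fin 2), (0 : Fin (n+1)))) : ℤ) := by
    rw [cost_eq]
    push_cast
    rw [Fintype.sum_prod_type, Fin.sum_univ_two]
    rw [Finset.sum_congr rfl (fun k _ => key 0 k), Finset.sum_congr rfl (fun k _ => key 1 k),
      keym]
    rw [Finset.sum_sub_distrib, Finset.sum_sub_distrib, Finset.sum_sub_distrib,
      Finset.sum_sub_distrib, ← Finset.mul_sum, Finset.sum_const, Finset.card_univ,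
      Fintype.card_fin, ← Finset.mul_sum, Finset.sum_const, Finset.card_univ,
      Fintype.card_fin]
    push_cast
    ring
  -- total sum of all positions
  have htot : (∑ z : (Fin 2 × Fin (n+1)) ⊕ (doubleStar n).edgeSet, P z)
      = ∑ j : Fin (numElts (doubleStar n)), (j : ℕ) :=
    Equiv.sum_comp x.symm (fun j => (j : ℕ))
  have hT2 : 2 * (∑ j : Fin (numElts (doubleStar n)), (j : ℕ)) = (4*n+3) * (4*n+2) := by
    have h := Finset.sum_range_id_mul_two (numElts (doubleStar n))
    rw [Fin.sum_univ_eq_sum_range (fun i => i) (numElts (doubleStar n))]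
    rw [numElts_eq] at h ⊢
    rw [show 4*n+3-1 = 4*n+2 by omega] at h
    omega
  -- split the total sum
  have hsplit : (∑ z : (Fin 2 × Fin (n+1)) ⊕ (doubleStar n).edgeSet, P z)
      = ((P (Sum.inl ((0 : Fin 2), (0 : Fin (n+1)))) + ∑ k : Fin n, P (Sum.inl ((0 : Fin 2), k.succ)))
        + (P (Sum.inl ((1 : Fin 2), (0 : Fin (n+1)))) + ∑ k : Fin n, P (Sum.inl ((1 : Fin 2), k.succ))))
        + ((∑ k : Fin n, P (Sum.inr (spokeE n 0 k)) + ∑ k : Fin n, P (Sum.inr (spokeE n 1 k)))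
            + P (Sum.inr (midE n))) := by
    rw [Fintype.sum_sum_type]
    congr 1
    · rw [Fintype.sum_prod_type, Fin.sum_univ_two, Fin.sum_univ_succ, Fin.sum_univ_succ]
    · rw [← Equiv.sum_comp (edE n) (fun e => P (Sum.inr e)), Fintype.sum_sum_type,
        Fintype.sum_prod_type, Fin.sum_univ_two]
      simp [edE, edF]
  -- injectivity on the vertices
  have hinj : Function.Injective (fun v : Fin 2 × Fin (n+1) => P (Sum.inl v)) := by
    intro a b h
    have h2 : x.symm (Sum.inl a) = x.symm (Sum.inl b) := Fin.val_injective h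
    simpa using x.symm.injective h2
  have hSV := card_mul_le_two_sum _ hinj
  have hcardV : Fintype.card (Fin 2 × Fin (n+1)) = 2*n+2 := by
    simp [Fintype.card_prod]; omega
  rw [hcardV] at hSV
  have hsplitV : (∑ v : Fin 2 × Fin (n+1), P (Sum.inl v))
      = (P (Sum.inl ((0 : Fin 2), (0 : Fin (n+1)))) + ∑ k : Fin n, P (Sum.inl ((0 : Fin 2), k.succ)))
        + (P (Sum.inl ((1 : Fin 2), (0 : Fin (n+1)))) + ∑ k : Fin n, P (Sum.inl ((1 : Fin 2), k.succ))) := by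
    rw [Fintype.sum_prod_type, Fin.sum_univ_two, Fin.sum_univ_succ, Fin.sum_univ_succ]
  rw [hsplitV] at hSV
  -- the two hubs occupy distinct positions
  have hAB : 1 ≤ P (Sum.inl ((0 : Fin 2), (0 : Fin (n+1)))) + P (Sum.inl ((1 : Fin 2), (0 : Fin (n+1)))) := by
    have : P (Sum.inl ((0 : Fin 2), (0 : Fin (n+1)))) ≠ P (Sum.inl ((1 : Fin 2), (0 : Fin (n+1)))) := by
      intro h
      have := hinj h
      simp [Prod.ext_iff] at this
    omega
  -- assemble
  rw [hsplit] at htot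
  zify at htot hSV hAB hT2
  have hnH : (n : ℤ) * 1 ≤ n * ((P (Sum.inl ((0 : Fin 2), (0 : Fin (n+1)))) : ℤ)
      + (P (Sum.inl ((1 : Fin 2), (0 : Fin (n+1)))) : ℤ)) := by
    have hn0 : (0:ℤ) ≤ n := by positivity
    exact mul_le_mul_of_nonneg_left (by push_cast; linarith [hAB]) hn0
  have hgoal : (cost (doubleStar n) x : ℤ) ≤ 10*(n:ℤ)^2 + 10*n + 3 := by
    push_cast at htot hSV hT2 hnH hcost ⊢
    nlinarith [hcost, htot, hSV, hT2, hnH]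
  exact_mod_cast hgoal

end Aux

/-- `ν*(D_n) = 10n² + 10n + 3` for `n ≥ 1`. -/
theorem maxCost_doubleStar (n : ℕ) (hn : 1 ≤ n) :
    maxCost (doubleStar n) = 10 * n ^ 2 + 10 * n + 3 := by
  have hmem : 10 * n ^ 2 + 10 * n + 3 ∈
      {c | ∃ x, IsCSeq (doubleStar n) x ∧ cost (doubleStar n) x = c} :=
    ⟨x0 n, isCSeq_x0 n, cost_x0 n hn⟩
  have hub : ∀ c ∈ {c | ∃ x, IsCSeq (doubleStar n) x ∧ cost (doubleStar n) x = c},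
      c ≤ 10 * n ^ 2 + 10 * n + 3 := by
    rintro c ⟨x, hx, rfl⟩
    exact cost_le n hn x hx
  rw [maxCost]
  exact le_antisymm (csSup_le ⟨_, hmem⟩ hub) (le_csSup ⟨_, hub⟩ hmem)

end ConsCost
end

section
/- The minimum construction cost of the complete graph K_n is ν_*(K_n) = (n−1)n(n+1)(n+4)/12 for all n ≥ 1. -/
namespace ConsCost

variable {V : Type*} [Fintype V]

open Finset

section K
variable (n : ℕ)

local notation "G" => (⊤ : SimpleGraph (Fin n))

lemma card_edgeSet_top' : Nat.card (⊤ : SimpleGraph (Fin n)).edgeSet = n.choose 2 := by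
  rw [Nat.card_eq_fintype_card, ← SimpleGraph.edgeFinset_card,
    SimpleGraph.card_edgeFinset_top_eq_card_choose_two, Fintype.card_fin]

lemma numElts_top : numElts (⊤ : SimpleGraph (Fin n)) = (n+1).choose 2 := by
  rw [numElts, card_edgeSet_top', Fintype.card_fin, Nat.choose_succ_succ, Nat.choose_one_right]

variable {n}

/-- vertex-position sum of a c-sequence -/
noncomputable def vS (x : Fin (numElts (⊤ : SimpleGraph (Fin n))) ≃ Fin n ⊕ (⊤ : SimpleGraph (Fin n)).edgeSet) : ℕ :=
  ∑ v : Fin n, (x.symm (Sum.inl v) : ℕ)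

/-- sum over strictly-ordered pairs -/
lemma sum_offDiag_fst (h : Fin n → ℕ) :
    ∑ p ∈ (univ : Finset (Fin n)).offDiag, h p.1 = (n - 1) * ∑ v, h v := by
  rcases n with - | m
  · simp
  have hu : ∑ p ∈ (univ ×ˢ univ : Finset (Fin (m+1) × Fin (m+1))), h p.1
      = ∑ p ∈ (univ : Finset (Fin (m+1))).diag, h p.1
        + ∑ p ∈ (univ : Finset (Fin (m+1))).offDiag, h p.1 := by
    rw [← Finset.sum_union (Finset.disjoint_diag_offDiag _), Finset.diag_union_offDiag]
  have h1 : ∑ p ∈ (univ ×ˢ univ : Finset (Fin (m+1) × Fin (m+1))), h p.1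
      = (m+1) * ∑ v, h v := by
    rw [Finset.sum_product]
    simp only [Finset.sum_const, card_univ, Fintype.card_fin, smul_eq_mul]
    rw [← Finset.mul_sum]
  have h2 : ∑ p ∈ (univ : Finset (Fin (m+1))).diag, h p.1 = ∑ v, h v := by
    rw [Finset.sum_diag]
  have h3 : (m+1) * ∑ v, h v = ∑ v, h v + m * ∑ v, h v := by ring
  simp only [Nat.add_sub_cancel]
  omega

lemma sum_lt_pairs (h : Fin n → ℕ) :
    ∑ p ∈ ((univ : Finset (Fin n)).offDiag.filter fun p => p.1 < p.2), (h p.1 + h p.2)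
      = (n - 1) * ∑ v, h v := by
  have key : ∑ p ∈ ((univ : Finset (Fin n)).offDiag.filter fun p => ¬ p.1 < p.2), h p.1
      = ∑ p ∈ ((univ : Finset (Fin n)).offDiag.filter fun p => p.1 < p.2), h p.2 := by
    refine Finset.sum_equiv (Equiv.prodComm (Fin n) (Fin n)) ?_ ?_
    · intro p
      simp only [mem_filter, mem_offDiag, mem_univ, true_and, Equiv.prodComm_apply,
        Prod.fst_swap, Prod.snd_swap, not_lt]
      constructor
      · rintro ⟨hne, hle⟩; exact ⟨hne.symm, lt_of_le_of_ne hle hne.symm⟩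
      · rintro ⟨hne, hlt⟩; exact ⟨hne.symm, hlt.le⟩
    · intro p _; rfl
  rw [Finset.sum_add_distrib, ← key, Finset.sum_filter_add_sum_filter_not, sum_offDiag_fst]

/-- the lift expression appearing in `edgeCost`, as a function of the `Sym2`. -/
noncomputable def eL (x : Fin (numElts (⊤ : SimpleGraph (Fin n))) ≃ Fin n ⊕ (⊤ : SimpleGraph (Fin n)).edgeSet)
    (s : Sym2 (Fin n)) : ℕ :=
  Sym2.lift ⟨fun u w => ((x.symm (Sum.inl u) : ℕ) + (x.symm (Sum.inl w) : ℕ)),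
      fun u w => by dsimp only; omega⟩ s

lemma cost_identity (hn : 1 ≤ n)
    (x : Fin (numElts (⊤ : SimpleGraph (Fin n))) ≃ Fin n ⊕ (⊤ : SimpleGraph (Fin n)).edgeSet)
    (hx : IsCSeq ⊤ x) :
    cost ⊤ x + (n+1) * vS x = 2 * ∑ i : Fin (numElts (⊤ : SimpleGraph (Fin n))), (i : ℕ) := by
  -- per-edge identity
  have step1 : ∀ e : (⊤ : SimpleGraph (Fin n)).edgeSet,
      edgeCost ⊤ x e + eL x (e : Sym2 (Fin n)) = 2 * (x.symm (Sum.inr e) : ℕ) := by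
    rintro ⟨s, hs⟩
    induction s using Sym2.ind with
    | _ u w =>
      have h1 := hx ⟨s(u,w), hs⟩ u (by simp)
      have h2 := hx ⟨s(u,w), hs⟩ w (by simp)
      rw [Fin.lt_def] at h1 h2
      simp only [edgeCost, eL, Sym2.lift_mk]
      omega
  have hsum : cost ⊤ x = ∑ e : (⊤ : SimpleGraph (Fin n)).edgeSet, edgeCost ⊤ x e :=
    finsum_eq_sum_of_fintype _
  have hsplit : cost ⊤ x + ∑ e : (⊤ : SimpleGraph (Fin n)).edgeSet, eL x (e : Sym2 (Fin n))
      = 2 * ∑ e : (⊤ : SimpleGraph (Fin n)).edgeSet, (x.symm (Sum.inr e) : ℕ) := by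
    rw [hsum, ← Finset.sum_add_distrib, Finset.mul_sum]
    exact Finset.sum_congr rfl fun e _ => step1 e
  -- handshake: ∑ e, eL = (n-1) * vS
  have hD : ∑ e : (⊤ : SimpleGraph (Fin n)).edgeSet, eL x (e : Sym2 (Fin n))
      = (n - 1) * vS x := by
    have e1 : ∑ e : (⊤ : SimpleGraph (Fin n)).edgeSet, eL x (e : Sym2 (Fin n))
        = ∑ s ∈ Set.toFinset (⊤ : SimpleGraph (Fin n)).edgeSet, eL x s :=
      Finset.sum_set_coe (f := eL x) (s := (⊤ : SimpleGraph (Fin n)).edgeSet)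
    have e2 : Set.toFinset (⊤ : SimpleGraph (Fin n)).edgeSet
        = (univ : Finset (Fin n)).sym2.filter (fun s => ¬ s.IsDiag) := by
      ext s
      simp [SimpleGraph.edgeSet_top]
    have e3 := Finset.sum_sym2_filter_not_isDiag (univ : Finset (Fin n)) (eL x)
    rw [e1, e2]
    refine Eq.trans (Finset.sum_congr ?_ fun _ _ => rfl) (e3.trans ?_)
    · ext s; simp
    simp only [vS]
    rw [← sum_lt_pairs (fun v => (x.symm (Sum.inl v) : ℕ))]
    refine Finset.sum_congr ?_ fun p _ => ?_
    · ext p; simp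
    · obtain ⟨a, b⟩ := p; rfl
  -- total position sum
  have hT : vS x + ∑ e : (⊤ : SimpleGraph (Fin n)).edgeSet, (x.symm (Sum.inr e) : ℕ)
      = ∑ i : Fin (numElts (⊤ : SimpleGraph (Fin n))), (i : ℕ) := by
    rw [← Equiv.sum_comp x.symm (fun i : Fin (numElts (⊤ : SimpleGraph (Fin n))) => (i : ℕ)), Fintype.sum_sum_type]
    rfl
  have hmul : (n+1) * vS x = (n-1) * vS x + 2 * vS x := by
    obtain ⟨m, rfl⟩ : ∃ m, n = m + 1 := ⟨n-1, (Nat.succ_pred_eq_of_pos hn).symm⟩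
    simp only [Nat.add_sub_cancel]; ring
  omega

lemma vS_le (x : Fin (numElts (⊤ : SimpleGraph (Fin n))) ≃ Fin n ⊕ (⊤ : SimpleGraph (Fin n)).edgeSet)
    (hx : IsCSeq ⊤ x) :
    vS x ≤ ∑ k ∈ range n, (k+1).choose 2 := by
  set y : Fin n → Fin (numElts (⊤ : SimpleGraph (Fin n))) := fun v => x.symm (Sum.inl v) with hy
  have hyinj : Function.Injective y := fun a b h => by
    have := x.symm.injective h
    exact Sum.inl_injective this
  set W : Fin n → Finset (Fin n) := fun v => univ.filter (fun w => y w < y v) with hW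
  set r : Fin n → ℕ := fun v => (W v).card with hr
  -- Step A : position bound
  have stepA : ∀ v, (y v : ℕ) ≤ (r v + 1).choose 2 := by
    intro v
    set Ev : Finset (⊤ : SimpleGraph (Fin n)).edgeSet :=
      univ.filter (fun e => x.symm (Sum.inr e) < y v) with hEv
    have hA : (y v : ℕ) = ((Iio (y v)).image x).card := by
      rw [Finset.card_image_of_injective _ x.injective, Fin.card_Iio]
    have hsub : (Iio (y v)).image x ⊆ (W v).image Sum.inl ∪ Ev.image Sum.inr := by
      intro z hz
      rw [Finset.mem_image] at hz
      obtain ⟨i, hi, rfl⟩ := hz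
      rw [Finset.mem_Iio] at hi
      rcases hxi : x i with w | e
      · refine Finset.mem_union_left _ (Finset.mem_image.2 ⟨w, ?_, hxi.symm ▸ rfl⟩)
        simp only [hW, Finset.mem_filter, Finset.mem_univ, true_and, hy]
        rw [← hxi, Equiv.symm_apply_apply]
        exact hi
      · refine Finset.mem_union_right _ (Finset.mem_image.2 ⟨e, ?_, hxi.symm ▸ rfl⟩)
        simp only [hEv, Finset.mem_filter, Finset.mem_univ, true_and]
        rw [← hxi, Equiv.symm_apply_apply]
        exact hi
    have hcard1 : (y v : ℕ) ≤ r v + Ev.card := by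
      rw [hA]
      calc ((Iio (y v)).image x).card ≤ ((W v).image Sum.inl ∪ Ev.image Sum.inr).card :=
            Finset.card_le_card hsub
        _ ≤ ((W v).image Sum.inl).card + (Ev.image Sum.inr).card := Finset.card_union_le _ _
        _ = r v + Ev.card := by
            rw [Finset.card_image_of_injective _ Sum.inl_injective,
              Finset.card_image_of_injective _ Sum.inr_injective]
    -- bound on Ev.card
    have hEsub : Ev.image Subtype.val ⊆ ((W v).sym2).filter (fun s => ¬ s.IsDiag) := by
      intro s hs
      rw [Finset.mem_image] at hs
      obtain ⟨e, he, rfl⟩ := hs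
      simp only [hEv, Finset.mem_filter, Finset.mem_univ, true_and] at he
      rw [Finset.mem_filter]
      constructor
      · rw [Finset.mem_sym2_iff]
        intro a ha
        simp only [hW, Finset.mem_filter, Finset.mem_univ, true_and]
        exact lt_trans (hx e a ha) he
      · exact (SimpleGraph.not_isDiag_of_mem_edgeSet _ e.property)
    have hDsub : (W v).image Sym2.diag ⊆ ((W v).sym2).filter (fun s => s.IsDiag) := by
      intro s hs
      rw [Finset.mem_image] at hs
      obtain ⟨a, ha, rfl⟩ := hs
      rw [Finset.mem_filter]
      exact ⟨Finset.mk_mem_sym2_iff.2 ⟨ha, ha⟩, Sym2.diag_isDiag a⟩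
    have h1 : Ev.card ≤ (((W v).sym2).filter (fun s => ¬ s.IsDiag)).card := by
      rw [← Finset.card_image_of_injective Ev Subtype.val_injective]
      exact Finset.card_le_card hEsub
    have h2 : r v ≤ (((W v).sym2).filter (fun s => s.IsDiag)).card := by
      show (W v).card ≤ _
      rw [← Finset.card_image_of_injective (W v) Sym2.diag_injective]
      exact Finset.card_le_card hDsub
    have h3 : (((W v).sym2).filter (fun s => s.IsDiag)).card
        + (((W v).sym2).filter (fun s => ¬ s.IsDiag)).card = (W v).sym2.card :=
      Finset.card_filter_add_card_filter_not _
    have h4 : (W v).sym2.card = (r v + 1).choose 2 := by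
      rw [Finset.card_sym2, hr]
    omega
  -- Step B : r v < n
  have stepB : ∀ v, r v < n := by
    intro v
    have : W v ⊆ univ.erase v := by
      intro w hw
      simp only [hW, Finset.mem_filter, Finset.mem_univ, true_and] at hw
      refine Finset.mem_erase.2 ⟨?_, Finset.mem_univ _⟩
      rintro rfl
      exact lt_irrefl _ hw
    have := Finset.card_le_card this
    rw [Finset.card_erase_of_mem (Finset.mem_univ v), card_univ, Fintype.card_fin] at this
    have hn0 : 0 < n := v.pos
    show (W v).card < n
    omega
  -- Step C : r is injective
  have hmono : ∀ a b, y a < y b → r a < r b := by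
    intro a b hab
    apply Finset.card_lt_card
    rw [Finset.ssubset_iff_of_subset]
    · refine ⟨a, ?_, ?_⟩
      · simp only [hW, Finset.mem_filter, Finset.mem_univ, true_and]; exact hab
      · simp only [hW, Finset.mem_filter, Finset.mem_univ, true_and]; exact lt_irrefl _
    · intro w hw
      simp only [hW, Finset.mem_filter, Finset.mem_univ, true_and] at hw ⊢
      exact lt_trans hw hab
  have hrinj : Function.Injective (fun v => (⟨r v, stepB v⟩ : Fin n)) := by
    intro a b hab
    simp only [Fin.mk.injEq] at hab
    rcases lt_trichotomy (y a) (y b) with h | h | h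
    · exact absurd hab (hmono a b h).ne
    · exact hyinj h
    · exact absurd hab.symm (hmono b a h).ne
  -- Step D : conclude
  have hsum : ∑ v : Fin n, (r v + 1).choose 2 = ∑ k ∈ range n, (k+1).choose 2 := by
    rw [← Fin.sum_univ_eq_sum_range (fun k => (k+1).choose 2)]
    exact Fintype.sum_bijective _ ((Fintype.bijective_iff_injective_and_card _).2 ⟨hrinj, rfl⟩)
      _ _ (fun v => rfl)
  calc vS x = ∑ v : Fin n, (y v : ℕ) := rfl
    _ ≤ ∑ v : Fin n, (r v + 1).choose 2 := Finset.sum_le_sum fun v _ => stepA v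
    _ = _ := hsum

/-- vertex position in the greedy sequence -/
def vp (k : ℕ) : ℕ := (k+1).choose 2

lemma vp_succ (k : ℕ) : vp (k+1) = vp k + (k+1) := by
  rw [vp, vp, Nat.choose_succ_succ, Nat.choose_one_right, Nat.add_comm]

lemma vp_strictMono : StrictMono vp := by
  apply strictMono_nat_of_lt_succ
  intro k; rw [vp_succ]; omega

/-- edge position in the greedy sequence -/
noncomputable def epos (s : Sym2 (Fin n)) : ℕ :=
  Sym2.lift ⟨fun (a b : Fin n) => vp (max (a:ℕ) (b:ℕ)) + 1 + min (a:ℕ) (b:ℕ),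
    fun a b => by dsimp only; rw [max_comm, min_comm]⟩ s

lemma epos_rep (s : Sym2 (Fin n)) (hs : ¬ s.IsDiag) :
    ∃ a b : Fin n, (a:ℕ) < (b:ℕ) ∧ s = s(a,b) ∧ epos s = vp b + 1 + a := by
  induction s using Sym2.ind with
  | _ u w =>
    rw [Sym2.mk_isDiag_iff] at hs
    have hne : (u:ℕ) ≠ (w:ℕ) := fun h => hs (Fin.ext h)
    rcases lt_or_gt_of_ne hne with h | h
    · exact ⟨u, w, h, rfl, by
        simp only [epos, Sym2.lift_mk]
        rw [Nat.max_eq_right h.le, Nat.min_eq_left h.le]⟩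
    · exact ⟨w, u, h, Sym2.eq_swap.symm, by
        simp only [epos, Sym2.lift_mk]
        rw [Nat.max_eq_left h.le, Nat.min_eq_right h.le]⟩

lemma exists_opt : ∃ x : Fin (numElts (⊤ : SimpleGraph (Fin n))) ≃ Fin n ⊕ (⊤ : SimpleGraph (Fin n)).edgeSet,
    IsCSeq ⊤ x ∧ vS x = ∑ k ∈ range n, (k+1).choose 2 := by
  classical
  have hnd : ∀ e : (⊤ : SimpleGraph (Fin n)).edgeSet, ¬ (e : Sym2 (Fin n)).IsDiag :=
    fun e => SimpleGraph.not_isDiag_of_mem_edgeSet _ e.property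
  -- the position function
  set fval : Fin n ⊕ (⊤ : SimpleGraph (Fin n)).edgeSet → ℕ :=
    Sum.elim (fun k => vp k) (fun e => epos (e : Sym2 (Fin n))) with hfval
  have hbnd : ∀ z, fval z < vp n := by
    rintro (k | e)
    · exact vp_strictMono k.isLt
    · obtain ⟨a, b, hab, -, heq⟩ := epos_rep _ (hnd e)
      have h1 : vp (b+1) = vp b + (b+1) := vp_succ b
      have h2 : vp ((b:ℕ)+1) ≤ vp n := vp_strictMono.monotone b.isLt
      simp only [hfval, Sum.elim_inr, heq]
      omega
  have hNE : numElts (⊤ : SimpleGraph (Fin n)) = vp n := numElts_top n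
  set F : Fin n ⊕ (⊤ : SimpleGraph (Fin n)).edgeSet → Fin (numElts (⊤ : SimpleGraph (Fin n))) :=
    fun z => ⟨fval z, by rw [hNE]; exact hbnd z⟩ with hF
  -- no vertex position equals an edge position
  have hno : ∀ (k a b : ℕ), a < b → vp k ≠ vp b + 1 + a := by
    intro k a b hab heq
    rcases le_or_gt k b with h | h
    · have := vp_strictMono.monotone h
      omega
    · have h1 : vp (b+1) ≤ vp k := vp_strictMono.monotone (show b+1 ≤ k from h)
      have h2 := vp_succ b
      omega
  have hinj : Function.Injective F := by
    rintro (k | e) (k' | e') h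
    all_goals simp only [hF, Fin.mk.injEq, hfval, Sum.elim_inl, Sum.elim_inr] at h
    · exact congrArg Sum.inl (Fin.ext (vp_strictMono.injective h))
    · obtain ⟨a, b, hab, -, heq⟩ := epos_rep _ (hnd e')
      exact absurd (h.trans (by rw [heq])) (hno _ _ _ hab)
    · obtain ⟨a, b, hab, -, heq⟩ := epos_rep _ (hnd e)
      exact absurd (h.symm.trans (by rw [heq])) (hno _ _ _ hab)
    · obtain ⟨a, b, hab, hs, heq⟩ := epos_rep _ (hnd e)
      obtain ⟨a', b', hab', hs', heq'⟩ := epos_rep _ (hnd e')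
      rw [heq, heq'] at h
      have hbb : (b:ℕ) = (b':ℕ) := by
        rcases lt_trichotomy (b:ℕ) (b':ℕ) with hlt | hEq | hlt
        · have h1 := vp_succ (b:ℕ)
          have h2 : vp ((b:ℕ)+1) ≤ vp b' := vp_strictMono.monotone hlt
          omega
        · exact hEq
        · have h1 := vp_succ (b':ℕ)
          have h2 : vp ((b':ℕ)+1) ≤ vp b := vp_strictMono.monotone hlt
          omega
      have haa : (a:ℕ) = (a':ℕ) := by rw [hbb] at h; omega
      refine congrArg Sum.inr (Subtype.ext ?_)
      show (e : Sym2 (Fin n)) = (e' : Sym2 (Fin n))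
      rw [hs, hs', Fin.ext hbb, Fin.ext haa]
  have hcard : Fintype.card (Fin n ⊕ (⊤ : SimpleGraph (Fin n)).edgeSet)
      = Fintype.card (Fin (numElts (⊤ : SimpleGraph (Fin n)))) := by
    rw [Fintype.card_sum, Fintype.card_fin, Fintype.card_fin, numElts,
      Fintype.card_fin, Nat.card_eq_fintype_card]
  have hbij : Function.Bijective F :=
    (Fintype.bijective_iff_injective_and_card F).2 ⟨hinj, hcard⟩
  refine ⟨(Equiv.ofBijective F hbij).symm, ?_, ?_⟩
  · intro e v hv
    have h1 : ((Equiv.ofBijective F hbij).symm.symm (Sum.inl v) : ℕ) = vp v := rfl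
    have h2 : ((Equiv.ofBijective F hbij).symm.symm (Sum.inr e) : ℕ)
        = epos (e : Sym2 (Fin n)) := rfl
    rw [Fin.lt_def, h1, h2]
    obtain ⟨a, b, hab, hs, heq⟩ := epos_rep _ (hnd e)
    rw [hs, Sym2.mem_iff] at hv
    have h3 : vp (b+1) = vp b + (b+1) := vp_succ b
    rcases hv with rfl | rfl
    · have : vp (v:ℕ) ≤ vp (b:ℕ) := vp_strictMono.monotone hab.le
      omega
    · omega
  · show ∑ v : Fin n, ((Equiv.ofBijective F hbij).symm.symm (Sum.inl v) : ℕ) = _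
    have : ∀ v : Fin n, ((Equiv.ofBijective F hbij).symm.symm (Sum.inl v) : ℕ) = vp v :=
      fun v => rfl
    simp only [this]
    exact Fin.sum_univ_eq_sum_range (fun k => (k+1).choose 2) n

lemma vp2 (k : ℕ) : 2 * vp k = (k+1) * k := by
  induction k with
  | zero => simp [vp]
  | succ l ih =>
    rw [vp_succ]
    ring_nf at ih ⊢
    linarith

lemma B6 (n : ℕ) : 6 * ∑ k ∈ range n, (k+1).choose 2 = (n-1) * n * (n+1) := by
  induction n with
  | zero => simp
  | succ m ih =>
    rw [Finset.sum_range_succ]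
    have h2 := vp2 m
    rw [vp] at h2
    rcases m with - | l
    · simp [vp, Nat.choose]
    · simp only [Nat.add_sub_cancel] at ih ⊢
      ring_nf at ih h2 ⊢
      linarith

end K

/-- `ν_*(K_n) = (n−1)n(n+1)(n+4)/12` for `n ≥ 1`. -/
theorem minCost_completeGraph (n : ℕ) (hn : 1 ≤ n) :
    12 * minCost (⊤ : SimpleGraph (Fin n)) = (n - 1) * n * (n + 1) * (n + 4) := by
  obtain ⟨x0, hx0, hS0⟩ := exists_opt (n := n)
  set B := ∑ k ∈ range n, (k+1).choose 2 with hB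
  set T := ∑ i : Fin (numElts (⊤ : SimpleGraph (Fin n))), (i:ℕ) with hT
  have hid0 : cost ⊤ x0 + (n+1) * B = 2 * T := by
    rw [← hS0]; exact cost_identity hn x0 hx0
  have hmem : cost ⊤ x0 ∈ {c | ∃ x, IsCSeq (⊤ : SimpleGraph (Fin n)) x ∧ cost ⊤ x = c} :=
    ⟨x0, hx0, rfl⟩
  have hle : minCost (⊤ : SimpleGraph (Fin n)) ≤ cost ⊤ x0 := Nat.sInf_le hmem
  have hge : cost ⊤ x0 ≤ minCost (⊤ : SimpleGraph (Fin n)) := by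
    apply le_csInf ⟨_, hmem⟩
    rintro c ⟨x, hx, rfl⟩
    have hid := cost_identity hn x hx
    have hvle : vS x ≤ B := vS_le x hx
    have hmul : (n+1) * vS x ≤ (n+1) * B := Nat.mul_le_mul_left _ hvle
    omega
  have hEq : minCost (⊤ : SimpleGraph (Fin n)) = cost ⊤ x0 := le_antisymm hle hge
  -- closed forms
  have hNpos : 0 < numElts (⊤ : SimpleGraph (Fin n)) := by
    rw [numElts_top]; exact Nat.choose_pos (by omega)
  obtain ⟨K, hK⟩ : ∃ K, numElts (⊤ : SimpleGraph (Fin n)) = K + 1 :=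
    ⟨_, (Nat.succ_pred_eq_of_pos hNpos).symm⟩
  have hT2 : 2 * T = (K+1) * K := by
    have h1 : T = ∑ i ∈ range (numElts (⊤ : SimpleGraph (Fin n))), i := by
      rw [hT]; exact Fin.sum_univ_eq_sum_range (fun i => i) _
    have h2 := Finset.sum_range_id_mul_two (numElts (⊤ : SimpleGraph (Fin n)))
    rw [hK] at h1 h2
    simp only [Nat.add_sub_cancel] at h2
    linarith
  have hN2 : 2 * K + 2 = (n+1) * n := by
    have := vp2 n
    rw [vp, ← numElts_top, hK] at this
    linarith
  have hB6 : 6 * B = (n-1) * n * (n+1) := B6 n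
  obtain ⟨m, rfl⟩ : ∃ m, n = m + 1 := ⟨n-1, (Nat.succ_pred_eq_of_pos hn).symm⟩
  simp only [Nat.add_sub_cancel] at hB6 ⊢
  have hpoly : 12 * ((K+1) * K) = 12 * ((m+2) * B) + m * (m+1) * (m+2) * (m+5) := by
    have c1 : (2 * K + 2 : ℤ) = ((m:ℤ)+2) * ((m:ℤ)+1) := by exact_mod_cast hN2
    have c2 : (6 * B : ℤ) = (m:ℤ) * ((m:ℤ)+1) * ((m:ℤ)+2) := by exact_mod_cast hB6
    have : (12 * ((K+1) * K) : ℤ) = 12 * (((m:ℤ)+2) * (B:ℤ)) + (m:ℤ) * ((m:ℤ)+1) * ((m:ℤ)+2) * ((m:ℤ)+5) := by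
      linear_combination (6*(K:ℤ) + 3*((m:ℤ)+1)*((m:ℤ)+2)) * c1 - 2*((m:ℤ)+2) * c2
    exact_mod_cast this
  have h12 : 12 * minCost (⊤ : SimpleGraph (Fin (m+1))) + 12 * ((m+2) * B) = 12 * (2 * T) := by
    rw [hEq]
    linarith [hid0]
  rw [hT2] at h12
  linarith [hpoly, h12]
end ConsCost
end

section
/- The minimum construction cost of the path P_n with n vertices satisfies ν_*(P_n) ≤ 4n − 5 for all n ≥ 3. -/
namespace ConsCost

variable {V : Type*} [Fintype V]

lemma path_edge_char {n : ℕ} (e : (SimpleGraph.pathGraph n).edgeSet) :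
    ∃ i : ℕ, ∃ h : i + 1 < n,
      (e : Sym2 (Fin n)) = s(⟨i, Nat.lt_of_succ_lt h⟩, ⟨i + 1, h⟩) := by
  obtain ⟨s, hs⟩ := e
  induction s using Sym2.ind with
  | _ u w =>
    have hadj : (SimpleGraph.pathGraph n).Adj u w := hs
    rw [SimpleGraph.pathGraph_adj] at hadj
    obtain ⟨uv, hu⟩ := u
    obtain ⟨wv, hw⟩ := w
    rcases hadj with h | h
    · have h' : uv + 1 = wv := h
      subst h'
      exact ⟨uv, hw, rfl⟩
    · have h' : wv + 1 = uv := h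
      subst h'
      exact ⟨wv, hu, Sym2.eq_swap⟩

noncomputable def eMin {n : ℕ} (e : (SimpleGraph.pathGraph n).edgeSet) : ℕ :=
  Sym2.lift ⟨fun u w => min u.val w.val, fun u w => by simp [min_comm]⟩ (e : Sym2 (Fin n))

lemma eMin_spec {n : ℕ} (e : (SimpleGraph.pathGraph n).edgeSet) :
    ∃ h : eMin e + 1 < n,
      (e : Sym2 (Fin n)) = s(⟨eMin e, Nat.lt_of_succ_lt h⟩, ⟨eMin e + 1, h⟩) := by
  obtain ⟨i, h, he⟩ := path_edge_char e
  have hm : eMin e = i := by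
    simp [eMin, he, Sym2.lift_mk]
  subst hm
  exact ⟨h, he⟩

noncomputable def eIdx {n : ℕ} (e : (SimpleGraph.pathGraph n).edgeSet) : Fin (n - 1) :=
  ⟨eMin e, by have := (eMin_spec e).1; omega⟩

def eMk {n : ℕ} (i : Fin (n - 1)) : (SimpleGraph.pathGraph n).edgeSet :=
  ⟨s(⟨i.val, by have := i.isLt; omega⟩, ⟨i.val + 1, by have := i.isLt; omega⟩), by
    rw [SimpleGraph.mem_edgeSet, SimpleGraph.pathGraph_adj]; left; rfl⟩

lemma eIdx_eMk {n : ℕ} (i : Fin (n - 1)) : eIdx (eMk i) = i := by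
  apply Fin.ext
  simp [eIdx, eMin, eMk, Sym2.lift_mk]

lemma eMk_eIdx {n : ℕ} (e : (SimpleGraph.pathGraph n).edgeSet) : eMk (eIdx e) = e := by
  obtain ⟨h, he⟩ := eMin_spec e
  apply Subtype.ext
  rw [he]
  rfl

noncomputable def edgeEquiv (n : ℕ) : (SimpleGraph.pathGraph n).edgeSet ≃ Fin (n - 1) :=
  ⟨eIdx, eMk, eMk_eIdx, eIdx_eMk⟩

def posOf (n : ℕ) : (Fin n ⊕ Fin (n - 1)) → Fin (2 * n - 1)
  | .inl v => ⟨if v.val = 0 then 0 else 2 * v.val - 1, by have := v.isLt; split <;> omega⟩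
  | .inr i => ⟨2 * i.val + 2, by have := i.isLt; omega⟩

lemma posOf_bij (n : ℕ) : Function.Bijective (posOf n) := by
  rw [Fintype.bijective_iff_injective_and_card]
  constructor
  · rintro (a | a) (b | b) h <;> simp only [posOf, Fin.mk.injEq] at h
    · have ha := a.isLt; have hb := b.isLt
      split_ifs at h <;> exact congrArg Sum.inl (Fin.ext (by omega))
    · have ha := a.isLt; have hb := b.isLt
      split_ifs at h <;> omega
    · have ha := a.isLt; have hb := b.isLt
      split_ifs at h <;> omega
    · exact congrArg Sum.inr (Fin.ext (by omega))
  · simp; omega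

lemma hcard (n : ℕ) : numElts (SimpleGraph.pathGraph n) = 2 * n - 1 := by
  rw [numElts, Nat.card_congr (edgeEquiv n)]
  simp
  omega

noncomputable def pathSeq (n : ℕ) :
    Fin (numElts (SimpleGraph.pathGraph n)) ≃ (Fin n) ⊕ (SimpleGraph.pathGraph n).edgeSet :=
  (finCongr (hcard n)).trans ((Equiv.ofBijective (posOf n) (posOf_bij n)).symm.trans
    (Equiv.sumCongr (Equiv.refl _) (edgeEquiv n).symm))

lemma pathSeq_symm_inl {n : ℕ} (v : Fin n) :
    (((pathSeq n).symm (Sum.inl v) : Fin (numElts (SimpleGraph.pathGraph n))) : ℕ)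
      = if v.val = 0 then 0 else 2 * v.val - 1 := rfl

lemma pathSeq_symm_inr {n : ℕ} (e : (SimpleGraph.pathGraph n).edgeSet) :
    (((pathSeq n).symm (Sum.inr e) : Fin (numElts (SimpleGraph.pathGraph n))) : ℕ)
      = 2 * (eIdx e).val + 2 := rfl

lemma pathSeq_isCSeq (n : ℕ) : IsCSeq (SimpleGraph.pathGraph n) (pathSeq n) := by
  intro e v hv
  rw [Fin.lt_def, pathSeq_symm_inl, pathSeq_symm_inr]
  obtain ⟨h, he⟩ := eMin_spec e
  rw [he, Sym2.mem_iff] at hv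
  have hidx : (eIdx e).val = eMin e := rfl
  rcases hv with rfl | rfl <;> simp only [hidx, Fin.val_mk] <;>
    first | (split_ifs <;> omega) | omega

lemma sum_aux (k : ℕ) :
    ∑ i : Fin (k + 1), (if (i : ℕ) = 0 then 3 else 4) = 4 * k + 3 := by
  rw [Fin.sum_univ_succ]
  simp [Fin.val_succ, Finset.sum_const, Finset.card_univ]
  omega

/-- `ν_*(P_n) ≤ 4n − 5` for `n ≥ 3`, where `P_n` is the path with `n` vertices. -/
theorem minCost_path_le (n : ℕ) (hn : 3 ≤ n) :
    minCost (SimpleGraph.pathGraph n) ≤ 4 * n - 5 := by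
  haveI : Fintype (SimpleGraph.pathGraph n).edgeSet := Fintype.ofEquiv _ (edgeEquiv n).symm
  have hc : cost (SimpleGraph.pathGraph n) (pathSeq n) = 4 * n - 5 := by
    rw [cost, finsum_eq_sum_of_fintype]
    rw [← (edgeEquiv n).symm.sum_comp (edgeCost (SimpleGraph.pathGraph n) (pathSeq n))]
    have key : ∀ i : Fin (n - 1),
        edgeCost (SimpleGraph.pathGraph n) (pathSeq n) ((edgeEquiv n).symm i)
          = if i.val = 0 then 3 else 4 := by
      intro i
      have : (edgeEquiv n).symm i = eMk i := rfl
      rw [this, edgeCost, pathSeq_symm_inr, eIdx_eMk]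
      obtain ⟨hlt, hspec⟩ := eMin_spec (eMk i)
      have h3 : eMin (eMk i) = i.val := congrArg Fin.val (eIdx_eMk i)
      rw [hspec, Sym2.lift_mk]
      dsimp only
      rw [pathSeq_symm_inl, pathSeq_symm_inl]
      simp only [Fin.val_mk]
      have := i.isLt
      split_ifs <;> first | contradiction | omega
    rw [Finset.sum_congr rfl (fun i _ => key i)]
    rw [← (finCongr (show n - 2 + 1 = n - 1 by omega)).sum_comp]
    simp only [finCongr_apply, Fin.coe_cast]
    rw [sum_aux]
    omega
  have : (4 * n - 5) ∈ {c | ∃ x, IsCSeq (SimpleGraph.pathGraph n) x ∧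
      cost (SimpleGraph.pathGraph n) x = c} := ⟨pathSeq n, pathSeq_isCSeq n, hc⟩
  exact Nat.sInf_le this



end ConsCost
end
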